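/- Let (M, φ, φ̂, ψ) be a quasi-Poisson module over a Lie–Rinehart pair (A, k) with QP-algebra g = A ⊕ k and projection π. Then L(M) := ℂ[t₀^{±1}] ⊗ M is a module over the Lie algebra L(g) = ℂ[t₀^{±1}] ⊗ g (with bracket [t₀^r ⊗ x, t₀^s ⊗ y] = t₀^{r+s} ⊗ ({x,y} − r x·π(y) + s π(x)·y)), under the action (t₀^r ⊗ x) * (t₀^s ⊗ ω) := t₀^{r+s} ⊗ (ψ_x(ω) − r φ̂_x(ω) + s φ_{π(x)}(ω)). -/
import Mathlib


section

variable {A : Type*} [CommRing A] [Algebra ℂ A]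
variable {L : Type*} [LieRing L] [LieAlgebra ℂ L] [Module A L]

/-- The commutative product `(a⊕δ)·(b⊕σ) = ab ⊕ (aσ + bδ)` on `g = A ⊕ k`. -/
def qpMul (x y : A × L) : A × L := (x.1 * y.1, x.1 • y.2 + y.1 • x.2)

/-- The bracket `{a⊕δ, b⊕σ} = (δ(b) − σ(a)) ⊕ [δ,σ]` on `g = A ⊕ k`. -/
def qpBracket (act : L →ₗ⁅ℂ⁆ Derivation ℂ A A) (x y : A × L) : A × L :=
  (act x.2 y.1 - act y.2 x.1, ⁅x.2, y.2⁆)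

/-- The degree-component of the bracket of `L(g) = ℂ[t₀^{±1}] ⊗ g`:
`[t₀^r ⊗ x, t₀^s ⊗ y] = t₀^{r+s} ⊗ ({x,y} − r·x·π(y) + s·π(x)·y)`. -/
def lBracket (act : L →ₗ⁅ℂ⁆ Derivation ℂ A A) (r : ℤ) (x : A × L) (s : ℤ) (y : A × L) :
    A × L :=
  qpBracket act x y - r • qpMul x (y.1, 0) + s • qpMul (x.1, 0) y

end

/-- For a quasi-Poisson module `(M, φ, φ̂, ψ)` over a Lie–Rinehart pair `(A, k)`,
`L(M) = ℂ[t₀^{±1}] ⊗ M` is a module over the Lie algebra `L(g) = ℂ[t₀^{±1}] ⊗ g` via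
`(t₀^r ⊗ x) * (t₀^s ⊗ ω) = t₀^{r+s} ⊗ (ψ_x(ω) − r φ̂_x(ω) + s φ_{π(x)}(ω))`:
expressed on pure tensors (which span everything, the degree of an action being the
sum of the degrees), the defining identity `[u,v]•w = u•(v•w) − v•(u•w)` holds. -/
theorem lM_is_module (A : Type*) [CommRing A] [Algebra ℂ A]
    (L : Type*) [LieRing L] [LieAlgebra ℂ L] [Module A L]
    (act : L →ₗ⁅ℂ⁆ Derivation ℂ A A)
    (M : Type*) [AddCommGroup M] [Module ℂ M]
    (φ : A →ₐ[ℂ] Module.End ℂ M)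
    (ψ : (A × L) →ₗ[ℂ] Module.End ℂ M)
    (φh : (A × L) →ₗ[ℂ] Module.End ℂ M)
    (hψ : ∀ x y : A × L, ψ (qpBracket act x y) = ⁅ψ x, ψ y⁆)
    (h3 : ∀ x y : A × L, ⁅φh x, φh y⁆ = φh (qpMul x (y.1, 0)) - φh (qpMul (x.1, 0) y))
    (h4 : ∀ (a : A) (x : A × L), φh (qpMul (a, 0) x) = φ a * φh x)
    (h5 : ∀ (x : A × L) (a : A), ⁅φh x, φ a⁆ = 0)
    (h6 : ∀ x y : A × L,
      ⁅φh x, ψ y⁆ = φh (qpBracket act x y) - φ y.1 * ψ x + ψ (qpMul x (y.1, 0)))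
    (h7 : ∀ (x : A × L) (a : A), ⁅ψ x, φ a⁆ = φ (act x.2 a)) :
    ∀ (r s p : ℤ) (x y : A × L) (ω : M),
      (ψ (lBracket act r x s y) - (r + s) • φh (lBracket act r x s y)
          + p • φ (lBracket act r x s y).1) ω =
        (ψ x - r • φh x + (s + p) • φ x.1)
            ((ψ y - s • φh y + p • φ y.1) ω) -
          (ψ y - s • φh y + (r + p) • φ y.1)
            ((ψ x - r • φh x + p • φ x.1) ω) := by
  intro r s p x y ω
  have hm1m : qpMul ((y.1 : A), (0 : L)) x = qpMul x (y.1, 0) := by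
    simp only [qpMul, smul_zero, add_zero, zero_add, mul_comm]
  have hm2m : qpMul y ((x.1 : A), (0 : L)) = qpMul (x.1, 0) y := by
    simp only [qpMul, smul_zero, add_zero, zero_add, mul_comm]
  have hbneg : qpBracket act y x = -qpBracket act x y := by
    refine Prod.ext ?_ ?_
    · show act y.2 x.1 - act x.2 y.1 = -(act x.2 y.1 - act y.2 x.1)
      rw [neg_sub]
    · exact (lie_skew y.2 x.2).symm
  have E1 : ψ (qpBracket act x y) = ψ x * ψ y - ψ y * ψ x := by
    rw [hψ x y, Ring.lie_def]
  have E2 : φh (qpMul x (y.1, 0)) = φ y.1 * φh x := by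
    rw [← hm1m, h4]
  have E3 : φh (qpMul (x.1, 0) y) = φ x.1 * φh y := h4 x.1 y
  have E4 : ψ (qpMul x (y.1, 0)) =
      (φh x * ψ y - ψ y * φh x) - φh (qpBracket act x y) + φ y.1 * ψ x := by
    have h := h6 x y
    rw [Ring.lie_def] at h
    linear_combination (norm := noncomm_ring) -h
  have E5 : ψ (qpMul (x.1, 0) y) =
      (φh y * ψ x - ψ x * φh y) + φh (qpBracket act x y) + φ x.1 * ψ y := by
    have h := h6 y x
    rw [Ring.lie_def, hbneg, hm2m, map_neg] at h
    linear_combination (norm := noncomm_ring) -h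
  have E6 : φ (qpBracket act x y).1 =
      (ψ x * φ y.1 - φ y.1 * ψ x) - (ψ y * φ x.1 - φ x.1 * ψ y) := by
    have h71 := h7 x y.1
    have h72 := h7 y x.1
    rw [Ring.lie_def] at h71 h72
    show φ (act x.2 y.1 - act y.2 x.1) = _
    rw [map_sub, ← h71, ← h72]
  have E7 : φ (qpMul x (y.1, 0)).1 = φ x.1 * φ y.1 := map_mul φ x.1 y.1
  have E8 : φ (qpMul (x.1, 0) y).1 = φ x.1 * φ y.1 := map_mul φ x.1 y.1
  have h3' : φh x * φh y - φh y * φh x = φ y.1 * φh x - φ x.1 * φh y := by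
    have h := h3 x y
    rw [Ring.lie_def, E2, E3] at h
    exact h
  have hc1 : φh x * φ y.1 = φ y.1 * φh x := by
    have h := h5 x y.1
    rw [Ring.lie_def, sub_eq_zero] at h
    exact h
  have hc2 : φ x.1 * φh y = φh y * φ x.1 := by
    have h := h5 y x.1
    rw [Ring.lie_def, sub_eq_zero] at h
    exact h.symm
  have hc3 : φ x.1 * φ y.1 = φ y.1 * φ x.1 := by
    rw [← map_mul, ← map_mul, mul_comm]
  have hl : lBracket act r x s y =
      qpBracket act x y - r • qpMul x (y.1, 0) + s • qpMul (x.1, 0) y := rfl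
  have key : ψ (lBracket act r x s y) - (r + s) • φh (lBracket act r x s y)
        + p • φ (lBracket act r x s y).1 =
      (ψ x - r • φh x + (s + p) • φ x.1) * (ψ y - s • φh y + p • φ y.1) -
        (ψ y - s • φh y + (r + p) • φ y.1) * (ψ x - r • φh x + p • φ x.1) := by
    rw [hl]
    simp only [Prod.fst_sub, Prod.fst_add, Prod.smul_fst, map_add, map_sub, map_zsmul]
    rw [E1, E2, E3, E4, E5, E6, E7, E8]
    linear_combination (norm := (simp only [mul_add, add_mul, sub_eq_add_neg, neg_mul, mul_neg, mul_smul_comm, smul_mul_assoc, smul_smul, neg_smul, smul_neg, smul_add, smul_sub, mul_assoc]; module))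
      (-(r*s) : ℤ) • h3' + (r*p : ℤ) • hc1 + (s*p : ℤ) • hc2 + (-(r*p) - p*p : ℤ) • hc3
  have key2 := DFunLike.congr_fun key ω
  simpa only [Module.End.mul_apply, LinearMap.sub_apply, LinearMap.add_apply,
    LinearMap.smul_apply] using key2
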